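/- arXiv:1901.03839 — 3 statements merged into one kernel-verified Lean document; each statement's English description precedes it below -/
import Mathlib

section
/- For the linear ODE V′ = (D+J)V, the one-step scheme defined by Y0 = V^{n−1} + Δt(D+J)V^{n−1}, Ŷ0 = Y0 + (Δt/2)J(Y0 − V^{n−1}), and (I − (Δt/2)D)Y1 = Ŷ0 − (Δt/2)D V^{n−1}, V^n = Y1 (the IETR scheme), is second-order consistent: if V^{n−1} = V(t_{n−1}) then V(t_n) − V^n = O(Δt³). -/
open Matrix

open Finset in
lemma exp_tail_bound {A : Type*} [NormedRing A] [NormedAlgebra ℝ A] [CompleteSpace A]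
    {m : ℕ} (hm : 0 < m) (x : A) (hx : ‖x‖ ≤ 1) :
    ‖NormedSpace.exp x - ∑ i ∈ range m, ((Nat.factorial i : ℝ))⁻¹ • x ^ i‖ ≤
      Real.exp 1 * ‖x‖ ^ m := by
  have hs : Summable (fun k : ℕ => ((Nat.factorial k : ℝ))⁻¹ • x ^ k) :=
    NormedSpace.expSeries_summable' x
  have h1 : NormedSpace.exp x - ∑ i ∈ range m, ((Nat.factorial i : ℝ))⁻¹ • x ^ i
      = ∑' k : ℕ, ((Nat.factorial (k + m) : ℝ))⁻¹ • x ^ (k + m) := by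
    rw [NormedSpace.exp_eq_tsum (𝕂 := ℝ)]
    dsimp only
    rw [← Summable.sum_add_tsum_nat_add m hs]
    abel
  rw [h1]
  have hb : ∀ k : ℕ, ‖((Nat.factorial (k + m) : ℝ))⁻¹ • x ^ (k + m)‖ ≤
      ((Nat.factorial k : ℝ))⁻¹ * ‖x‖ ^ m := by
    intro k
    rw [norm_smul, Real.norm_eq_abs, abs_of_nonneg (by positivity)]
    have h2 : ‖x ^ (k + m)‖ ≤ ‖x‖ ^ (k + m) := norm_pow_le' x (by omega)
    have h3 : ‖x‖ ^ (k + m) ≤ ‖x‖ ^ m :=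
      pow_le_pow_of_le_one (norm_nonneg x) hx (by omega)
    have h4 : ((Nat.factorial (k + m) : ℝ))⁻¹ ≤ (Nat.factorial k : ℝ)⁻¹ := by
      apply inv_anti₀ (by positivity)
      exact_mod_cast Nat.factorial_le (by omega)
    exact mul_le_mul h4 (h2.trans h3) (norm_nonneg _) (by positivity)
  have hgs : Summable (fun k : ℕ => ((Nat.factorial k : ℝ))⁻¹) := by
    simpa using NormedSpace.expSeries_div_summable (1 : ℝ)
  have hg : Summable (fun k : ℕ => ((Nat.factorial k : ℝ))⁻¹ * ‖x‖ ^ m) := hgs.mul_right _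
  calc ‖∑' k : ℕ, ((Nat.factorial (k + m) : ℝ))⁻¹ • x ^ (k + m)‖
      ≤ ∑' k : ℕ, ((Nat.factorial k : ℝ))⁻¹ * ‖x‖ ^ m := tsum_of_norm_bounded hg.hasSum hb
    _ = (∑' k : ℕ, ((Nat.factorial k : ℝ))⁻¹) * ‖x‖ ^ m := tsum_mul_right
    _ = Real.exp 1 * ‖x‖ ^ m := by
        rw [Real.exp_eq_exp_ℝ, NormedSpace.exp_eq_tsum_div]
        simp

set_option maxHeartbeats 1000000 in
/-- Second-order consistency of the IETR (implicit-explicit trapezoidal rule) scheme for the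
linear ODE `V′ = (D+J)V`: with `Y0 = W + Δt(D+J)W`, `Ŷ0 = Y0 + (Δt/2)J(Y0 − W)` and
`(I − (Δt/2)D)Y1 = Ŷ0 − (Δt/2)DW`, `V^n = Y1`, one step from the exact value `W = V(t_{n−1})`
satisfies `V(t_n) − V^n = O(Δt³)`. -/
theorem ietr_second_order_consistent {n : ℕ} (D J : Matrix (Fin n) (Fin n) ℝ)
    (W : Fin n → ℝ) :
    ∃ C δ : ℝ, 0 < δ ∧ ∀ Δt : ℝ, 0 < Δt → Δt < δ →
      ‖(NormedSpace.exp (Δt • (D + J))).mulVec W -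
          (1 - (Δt / 2) • D)⁻¹.mulVec
            ((W + Δt • (D + J).mulVec W) +
              (Δt / 2) • J.mulVec ((W + Δt • (D + J).mulVec W) - W) -
              (Δt / 2) • D.mulVec W)‖ ≤ C * Δt ^ 3 := by
  letI : SeminormedRing (Matrix (Fin n) (Fin n) ℝ) := Matrix.linftyOpSemiNormedRing
  letI : NormedRing (Matrix (Fin n) (Fin n) ℝ) := Matrix.linftyOpNormedRing
  letI : NormedAlgebra ℝ (Matrix (Fin n) (Fin n) ℝ) := Matrix.linftyOpNormedAlgebra
  set A : Matrix (Fin n) (Fin n) ℝ := D + J with hA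
  refine ⟨(‖(1 : Matrix (Fin n) (Fin n) ℝ)‖ + 2) *
      ((Real.exp 1 * ‖A‖ ^ 3 + ‖D‖ * (Real.exp 1 * ‖A‖ ^ 2)) * ‖W‖),
    (‖D‖ + ‖J‖ + 1)⁻¹, by positivity, ?_⟩
  intro Δt hΔ0 hΔδ
  have hK : (0:ℝ) < ‖D‖ + ‖J‖ + 1 := by positivity
  have hΔK : Δt * (‖D‖ + ‖J‖ + 1) < 1 := by
    have := mul_lt_mul_of_pos_right hΔδ hK
    rwa [inv_mul_cancel₀ hK.ne'] at this
  have hAn : ‖A‖ ≤ ‖D‖ + ‖J‖ := norm_add_le D J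
  have hΔA : ‖Δt • A‖ = Δt * ‖A‖ := by
    rw [norm_smul, Real.norm_eq_abs, abs_of_pos hΔ0]
  have h1 : ‖Δt • A‖ ≤ 1 := by
    rw [hΔA]; nlinarith [norm_nonneg A]
  have hxn : ‖(Δt / 2) • D‖ = Δt / 2 * ‖D‖ := by
    rw [norm_smul, Real.norm_eq_abs, abs_of_pos (by positivity)]
  have hxhalf : ‖(Δt / 2) • D‖ ≤ 1 / 2 := by
    rw [hxn]; nlinarith [norm_nonneg D, norm_nonneg J]
  have hxlt : ‖(Δt / 2) • D‖ < 1 := hxhalf.trans_lt (by norm_num)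
  set B : Matrix (Fin n) (Fin n) ℝ := 1 - (Δt / 2) • D with hB
  have hunit : IsUnit B := isUnit_one_sub_of_norm_lt_one hxlt
  have hBinv : B⁻¹ = Ring.inverse B := Matrix.nonsing_inv_eq_ringInverse B
  have hBinv_norm : ‖B⁻¹‖ ≤ ‖(1 : Matrix (Fin n) (Fin n) ℝ)‖ + 2 := by
    rw [hBinv, hB, ← geom_series_eq_inverse _ hxlt]
    have h := tsum_geometric_le_of_norm_lt_one _ hxlt
    have h2 : (1 - ‖(Δt / 2) • D‖)⁻¹ ≤ 2 := by
      rw [inv_le_comm₀ (by linarith) (by norm_num)]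
      linarith
    linarith
  have hdet : IsUnit B.det := (Matrix.isUnit_iff_isUnit_det B).mp hunit
  have hBmul : B⁻¹ * B = 1 := Matrix.nonsing_inv_mul B hdet
  set E : Matrix (Fin n) (Fin n) ℝ := NormedSpace.exp (Δt • A) with hE
  set R3 : Matrix (Fin n) (Fin n) ℝ :=
    E - ∑ i ∈ Finset.range 3, ((Nat.factorial i : ℝ))⁻¹ • (Δt • A) ^ i with hR3
  set R2 : Matrix (Fin n) (Fin n) ℝ :=
    E - ∑ i ∈ Finset.range 2, ((Nat.factorial i : ℝ))⁻¹ • (Δt • A) ^ i with hR2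
  set S : Matrix (Fin n) (Fin n) ℝ :=
    (1 + Δt • A + (Δt / 2 * Δt) • (J * A)) - (Δt / 2) • D with hS
  -- the scheme vector equals S *ᵥ W
  have hxvec : (W + Δt • A.mulVec W) +
      (Δt / 2) • J.mulVec ((W + Δt • A.mulVec W) - W) - (Δt / 2) • D.mulVec W
      = S *ᵥ W := by
    simp only [hS, Matrix.sub_mulVec, Matrix.add_mulVec, Matrix.one_mulVec,
      Matrix.smul_mulVec, Matrix.mulVec_smul, ← Matrix.mulVec_mulVec]
    rw [add_sub_cancel_left]
    rw [Matrix.mulVec_smul]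
    module
  -- key matrix identity
  have hkey : B * E - S = R3 - (Δt / 2) • (D * R2) := by
    have hsum3 : ∑ i ∈ Finset.range 3, ((Nat.factorial i : ℝ))⁻¹ • (Δt • A) ^ i
        = 1 + Δt • A + (Δt / 2 * Δt) • (A * A) := by
      rw [Finset.sum_range_succ, Finset.sum_range_succ, Finset.sum_range_one]
      norm_num [pow_two, smul_smul, smul_mul_smul_comm]
      module
    have hsum2 : ∑ i ∈ Finset.range 2, ((Nat.factorial i : ℝ))⁻¹ • (Δt • A) ^ i
        = 1 + Δt • A := by
      rw [Finset.sum_range_succ, Finset.sum_range_one]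
      norm_num
    rw [hR3, hR2, hsum3, hsum2, hB, hS, hA]
    simp only [Matrix.sub_mul, Matrix.mul_sub, Matrix.mul_add, Matrix.add_mul, Matrix.mul_one,
      Matrix.one_mul, Matrix.mul_smul, Matrix.smul_mul, smul_smul, smul_add, smul_sub]
    module
  -- rewrite the difference
  have hmain : B⁻¹ *ᵥ ((B * E - S) *ᵥ W) = E *ᵥ W - B⁻¹ *ᵥ (S *ᵥ W) := by
    rw [Matrix.sub_mulVec, Matrix.mulVec_sub, Matrix.mulVec_mulVec, Matrix.mulVec_mulVec,
      ← Matrix.mul_assoc, hBmul, Matrix.one_mul, ← Matrix.mulVec_mulVec]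
  rw [hxvec, ← hmain, hkey]
  -- norm bounds
  have he1 : (0:ℝ) ≤ Real.exp 1 := (Real.exp_pos 1).le
  have hR3n : ‖R3‖ ≤ Real.exp 1 * ‖A‖ ^ 3 * Δt ^ 3 := by
    have := exp_tail_bound (m := 3) (by norm_num) (Δt • A) h1
    rw [hΔA] at this
    calc ‖R3‖ ≤ Real.exp 1 * (Δt * ‖A‖) ^ 3 := this
      _ = Real.exp 1 * ‖A‖ ^ 3 * Δt ^ 3 := by ring
  have hR2n : ‖R2‖ ≤ Real.exp 1 * ‖A‖ ^ 2 * Δt ^ 2 := by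
    have := exp_tail_bound (m := 2) (by norm_num) (Δt • A) h1
    rw [hΔA] at this
    calc ‖R2‖ ≤ Real.exp 1 * (Δt * ‖A‖) ^ 2 := this
      _ = Real.exp 1 * ‖A‖ ^ 2 * Δt ^ 2 := by ring
  have hMn : ‖R3 - (Δt / 2) • (D * R2)‖ ≤
      (Real.exp 1 * ‖A‖ ^ 3 + ‖D‖ * (Real.exp 1 * ‖A‖ ^ 2)) * Δt ^ 3 := by
    calc ‖R3 - (Δt / 2) • (D * R2)‖ ≤ ‖R3‖ + ‖(Δt / 2) • (D * R2)‖ := norm_sub_le _ _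
      _ = ‖R3‖ + Δt / 2 * ‖D * R2‖ := by
          rw [norm_smul, Real.norm_eq_abs, abs_of_pos (by positivity)]
      _ ≤ ‖R3‖ + Δt / 2 * (‖D‖ * ‖R2‖) := by
          have := norm_mul_le D R2
          nlinarith
      _ ≤ (Real.exp 1 * ‖A‖ ^ 3 + ‖D‖ * (Real.exp 1 * ‖A‖ ^ 2)) * Δt ^ 3 := by
          have h5 : Δt / 2 * (‖D‖ * ‖R2‖) ≤
              Δt / 2 * (‖D‖ * (Real.exp 1 * ‖A‖ ^ 2 * Δt ^ 2)) :=
            mul_le_mul_of_nonneg_left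
              (mul_le_mul_of_nonneg_left hR2n (norm_nonneg D)) (by positivity)
          have h6 : (0:ℝ) ≤ ‖D‖ * (Real.exp 1 * ‖A‖ ^ 2) * Δt ^ 3 := by positivity
          nlinarith [hR3n]
  calc ‖B⁻¹ *ᵥ ((R3 - (Δt / 2) • (D * R2)) *ᵥ W)‖
      ≤ ‖B⁻¹‖ * ‖(R3 - (Δt / 2) • (D * R2)) *ᵥ W‖ := Matrix.linfty_opNorm_mulVec _ _
    _ ≤ ‖B⁻¹‖ * (‖R3 - (Δt / 2) • (D * R2)‖ * ‖W‖) := by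
        have := Matrix.linfty_opNorm_mulVec (R3 - (Δt / 2) • (D * R2)) W
        exact mul_le_mul_of_nonneg_left this (norm_nonneg _)
    _ ≤ (‖(1 : Matrix (Fin n) (Fin n) ℝ)‖ + 2) *
        (((Real.exp 1 * ‖A‖ ^ 3 + ‖D‖ * (Real.exp 1 * ‖A‖ ^ 2)) * Δt ^ 3) * ‖W‖) := by
        refine mul_le_mul hBinv_norm ?_ (by positivity) (by positivity)
        exact mul_le_mul_of_nonneg_right hMn (norm_nonneg W)
    _ = (‖(1 : Matrix (Fin n) (Fin n) ℝ)‖ + 2) *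
        ((Real.exp 1 * ‖A‖ ^ 3 + ‖D‖ * (Real.exp 1 * ‖A‖ ^ 2)) * ‖W‖) * Δt ^ 3 := by
        ring
end

section
/- For the linear ODE V′ = (A1 + A2 + A_M + J)V, the MCS scheme (with parameter θ > 0): Y0 = V^{n−1} + Δt(A1+A2+A_M+J)V^{n−1}; Y_j = Y_{j−1} + θΔt A_j(Y_j − V^{n−1}) for j = 1,2; Ŷ0 = Y0 + θΔt(A_M+J)(Y2 − V^{n−1}); Ỹ0 = Ŷ0 + (1/2 − θ)Δt(A1+A2+A_M+J)(Y2 − V^{n−1}); Ỹ_j = Ỹ_{j−1} + θΔt A_j(Ỹ_j − V^{n−1}) for j = 1,2; V^n = Ỹ2, is second-order consistent for every θ: if V^{n−1} = V(t_{n−1}) then V(t_n) − V^n = O(Δt³). -/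
open Matrix
open scoped Nat

set_option maxHeartbeats 1000000

attribute [local instance] Matrix.linftyOpNormedAddCommGroup Matrix.linftyOpNormedRing
  Matrix.linftyOpNormedSpace Matrix.linftyOpNormedAlgebra

private lemma mcs_complete {n : ℕ} : CompleteSpace (Matrix (Fin n) (Fin n) ℝ) :=
  FiniteDimensional.complete ℝ _

private lemma mcs_norm_one_le {n : ℕ} : ‖(1 : Matrix (Fin n) (Fin n) ℝ)‖ ≤ 1 := by
  rw [← Matrix.diagonal_one, Matrix.linfty_opNorm_diagonal]
  refine (pi_norm_le_iff_of_nonneg zero_le_one).mpr fun i => ?_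
  simp

private lemma mcs_inv_facts {n : ℕ} (B : Matrix (Fin n) (Fin n) ℝ) (hB : ‖B‖ ≤ 1 / 2) :
    (1 - B)⁻¹ * (1 - B) = 1 ∧ (1 - B) * (1 - B)⁻¹ = 1 ∧ ‖(1 - B)⁻¹‖ ≤ 2 := by
  have : CompleteSpace (Matrix (Fin n) (Fin n) ℝ) := mcs_complete
  have hu : IsUnit (1 - B) :=
    isUnit_one_sub_of_norm_lt_one (lt_of_le_of_lt hB (by norm_num))
  have hd := (Matrix.isUnit_iff_isUnit_det _).mp hu
  have h1 := Matrix.nonsing_inv_mul _ hd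
  have h2 := Matrix.mul_nonsing_inv _ hd
  refine ⟨h1, h2, ?_⟩
  have hexp : (1 - B)⁻¹ = 1 + B * (1 - B)⁻¹ := by
    have h3 : (1 - B)⁻¹ - B * (1 - B)⁻¹ = 1 := by
      have h4 := sub_mul (1 : Matrix (Fin n) (Fin n) ℝ) B (1 - B)⁻¹
      rw [one_mul] at h4
      rw [← h4]; exact h2
    exact sub_eq_iff_eq_add.mp h3
  have h4 : ‖(1 - B)⁻¹‖ ≤ ‖(1 : Matrix (Fin n) (Fin n) ℝ)‖ + ‖B‖ * ‖(1 - B)⁻¹‖ := by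
    conv_lhs => rw [hexp]
    exact le_trans (norm_add_le _ _) (by gcongr; exact norm_mul_le _ _)
  have h5 : ‖B‖ * ‖(1 - B)⁻¹‖ ≤ (1 / 2) * ‖(1 - B)⁻¹‖ :=
    mul_le_mul_of_nonneg_right hB (norm_nonneg _)
  have h6 := mcs_norm_one_le (n := n)
  linarith

private lemma mcs_exp_remainder {n : ℕ} (X : Matrix (Fin n) (Fin n) ℝ) :
    ‖NormedSpace.exp X - (1 + X + (2 : ℝ)⁻¹ • (X * X))‖ ≤ ‖X‖ ^ 3 * Real.exp ‖X‖ := by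
  have : CompleteSpace (Matrix (Fin n) (Fin n) ℝ) := mcs_complete
  have hs : Summable fun k : ℕ => ((k ! : ℝ))⁻¹ • X ^ k := NormedSpace.expSeries_summable' X
  have hns : Summable fun k : ℕ => ‖((k ! : ℝ))⁻¹ • X ^ k‖ :=
    NormedSpace.norm_expSeries_summable' X
  have hsum : (∑ i ∈ Finset.range 3, ((i ! : ℝ))⁻¹ • X ^ i)
      + ∑' i : ℕ, (((i + 3)! : ℝ))⁻¹ • X ^ (i + 3) = ∑' i : ℕ, ((i ! : ℝ))⁻¹ • X ^ i :=
    Summable.sum_add_tsum_nat_add 3 hs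
  have hpart : (∑ i ∈ Finset.range 3, ((i ! : ℝ))⁻¹ • X ^ i) = 1 + X + (2 : ℝ)⁻¹ • (X * X) := by
    simp [Finset.sum_range_succ, Nat.factorial, pow_succ]
  have hexp : NormedSpace.exp X
      = (1 + X + (2 : ℝ)⁻¹ • (X * X)) + ∑' i : ℕ, (((i + 3)! : ℝ))⁻¹ • X ^ (i + 3) := by
    rw [NormedSpace.exp_eq_tsum ℝ]
    show (∑' k : ℕ, ((k ! : ℝ))⁻¹ • X ^ k) = _
    rw [← hsum, hpart]
  rw [hexp, add_sub_cancel_left]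
  have hterm : ∀ i : ℕ, ‖(((i + 3)! : ℝ))⁻¹ • X ^ (i + 3)‖
      ≤ ‖X‖ ^ 3 * (((i ! : ℝ))⁻¹ * ‖X‖ ^ i) := by
    intro i
    rw [norm_smul, Real.norm_eq_abs, abs_of_nonneg (by positivity)]
    calc ((((i + 3)! : ℝ))⁻¹) * ‖X ^ (i + 3)‖
        ≤ (((i ! : ℝ))⁻¹) * (‖X‖ ^ i * ‖X‖ ^ 3) := by
          have h1 : ‖X ^ (i + 3)‖ ≤ ‖X‖ ^ (i + 3) := norm_pow_le' X (by omega)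
          have hfac : (i ! : ℝ) ≤ ((i + 3)! : ℝ) := by
            exact_mod_cast Nat.factorial_le (by omega)
          have hfp : (0:ℝ) < (i ! : ℝ) := by exact_mod_cast Nat.factorial_pos i
          have h2' : (((i + 3)! : ℝ))⁻¹ ≤ ((i ! : ℝ))⁻¹ := by gcongr
          calc ((((i + 3)! : ℝ))⁻¹) * ‖X ^ (i + 3)‖
              ≤ (((i ! : ℝ))⁻¹) * ‖X‖ ^ (i + 3) := by
                apply mul_le_mul h2' h1 (norm_nonneg _) (by positivity)
            _ = (((i ! : ℝ))⁻¹) * (‖X‖ ^ i * ‖X‖ ^ 3) := by rw [pow_add]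
      _ = ‖X‖ ^ 3 * (((i ! : ℝ))⁻¹ * ‖X‖ ^ i) := by ring
  have hrs : Summable fun i : ℕ => ‖X‖ ^ 3 * (((i ! : ℝ))⁻¹ * ‖X‖ ^ i) := by
    apply Summable.mul_left
    exact (Real.summable_pow_div_factorial ‖X‖).congr fun i => by
      rw [div_eq_mul_inv, mul_comm]
  have hls : Summable fun i : ℕ => ‖(((i + 3)! : ℝ))⁻¹ • X ^ (i + 3)‖ :=
    (summable_nat_add_iff 3).mpr hns
  calc ‖∑' i : ℕ, (((i + 3)! : ℝ))⁻¹ • X ^ (i + 3)‖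
      ≤ ∑' i : ℕ, ‖(((i + 3)! : ℝ))⁻¹ • X ^ (i + 3)‖ := norm_tsum_le_tsum_norm hls
    _ ≤ ∑' i : ℕ, ‖X‖ ^ 3 * (((i ! : ℝ))⁻¹ * ‖X‖ ^ i) := Summable.tsum_le_tsum hterm hls hrs
    _ = ‖X‖ ^ 3 * ∑' i : ℕ, ((i ! : ℝ))⁻¹ * ‖X‖ ^ i := tsum_mul_left
    _ = ‖X‖ ^ 3 * Real.exp ‖X‖ := by
        congr 1
        have : Real.exp ‖X‖ = ∑' i : ℕ, ((i ! : ℝ))⁻¹ • ‖X‖ ^ i := by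
          rw [Real.exp_eq_exp_ℝ, NormedSpace.exp_eq_tsum ℝ]
        rw [this]
        simp [smul_eq_mul]

/-- Second-order consistency of the MCS (modified Craig–Sneyd) scheme, adapted to PIDEs, for
the linear ODE `V′ = (A1 + A2 + A_M + J)V`: for every parameter `θ > 0`, one step of the
scheme started from the exact value `W = V(t_{n−1})` satisfies `V(t_n) − V^n = O(Δt³)`. -/
theorem mcs_second_order_consistent {n : ℕ} (A1 A2 AM J : Matrix (Fin n) (Fin n) ℝ)
    (θ : ℝ) (hθ : 0 < θ) (W : Fin n → ℝ) :
    ∃ C δ : ℝ, 0 < δ ∧ ∀ Δt : ℝ, 0 < Δt → Δt < δ →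
      let A := A1 + A2 + AM + J
      let Y0 := W + Δt • A.mulVec W
      let Y1 := (1 - (θ * Δt) • A1)⁻¹.mulVec (Y0 - (θ * Δt) • A1.mulVec W)
      let Y2 := (1 - (θ * Δt) • A2)⁻¹.mulVec (Y1 - (θ * Δt) • A2.mulVec W)
      let Yhat0 := Y0 + (θ * Δt) • (AM + J).mulVec (Y2 - W)
      let Ytilde0 := Yhat0 + ((1 / 2 - θ) * Δt) • A.mulVec (Y2 - W)
      let Ytilde1 := (1 - (θ * Δt) • A1)⁻¹.mulVec (Ytilde0 - (θ * Δt) • A1.mulVec W)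
      let Ytilde2 := (1 - (θ * Δt) • A2)⁻¹.mulVec (Ytilde1 - (θ * Δt) • A2.mulVec W)
      ‖(NormedSpace.exp (Δt • A)).mulVec W - Ytilde2‖ ≤ C * Δt ^ 3 := by
  classical
  have hLnn : (0:ℝ) ≤ ‖A1‖ + ‖A2‖ + ‖AM‖ + ‖J‖ := by positivity
  set L : ℝ := ‖A1‖ + ‖A2‖ + ‖AM‖ + ‖J‖ + 1 with hLdef
  have hL1 : 1 ≤ L := by simp only [hLdef]; linarith
  have hLpos : (0:ℝ) < L := lt_of_lt_of_le one_pos hL1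
  have hA1L : ‖A1‖ ≤ L := by
    simp only [hLdef]; linarith [norm_nonneg A2, norm_nonneg AM, norm_nonneg J]
  have hA2L : ‖A2‖ ≤ L := by
    simp only [hLdef]; linarith [norm_nonneg A1, norm_nonneg AM, norm_nonneg J]
  have hAMJL : ‖AM + J‖ ≤ L := by
    have := norm_add_le AM J
    simp only [hLdef]; linarith [norm_nonneg A1, norm_nonneg A2]
  have hAL : ‖A1 + A2 + AM + J‖ ≤ L := by
    have h1 := norm_add_le (A1 + A2 + AM) J
    have h2 := norm_add_le (A1 + A2) AM
    have h3 := norm_add_le A1 A2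
    simp only [hLdef]; linarith
  set cq : ℝ := 6 * θ * L ^ 2 with hcq
  set cs : ℝ := (θ + |1/2 - θ|) * L * (4 * L) with hcs
  have hcs0 : 0 ≤ cs := by rw [hcs]; positivity
  set cD : ℝ := 8 * θ^2 * L^2 * (L + cs) with hcD
  refine ⟨(L^3 * Real.exp L + θ * L * cq + |1/2 - θ| * L * cq + 2 * (θ * L * cs) + cD) * ‖W‖,
    min 1 (1 / (2 * θ * L)), lt_min one_pos (by positivity), ?_⟩
  intro Δt hΔt hΔtδ
  intro A Y0 Y1 Y2 Yhat0 Ytilde0 Ytilde1 Ytilde2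
  have hΔt1 : Δt ≤ 1 := le_of_lt (lt_of_lt_of_le hΔtδ (min_le_left _ _))
  have hsm : θ * Δt * L ≤ 1 / 2 := by
    have h2 : Δt < 1 / (2 * θ * L) := lt_of_lt_of_le hΔtδ (min_le_right _ _)
    have h3 : Δt * (2 * θ * L) < 1 := (lt_div_iff₀ (by positivity)).mp h2
    nlinarith
  have hθΔt : 0 < θ * Δt := mul_pos hθ hΔt
  -- norms of the implicit-stage perturbations
  have hB1L : ‖(θ * Δt) • A1‖ ≤ θ * Δt * L := by
    rw [norm_smul, Real.norm_eq_abs, abs_of_pos hθΔt]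
    exact mul_le_mul_of_nonneg_left hA1L (le_of_lt hθΔt)
  have hB2L : ‖(θ * Δt) • A2‖ ≤ θ * Δt * L := by
    rw [norm_smul, Real.norm_eq_abs, abs_of_pos hθΔt]
    exact mul_le_mul_of_nonneg_left hA2L (le_of_lt hθΔt)
  have hB1h : ‖(θ * Δt) • A1‖ ≤ 1 / 2 := le_trans hB1L hsm
  have hB2h : ‖(θ * Δt) • A2‖ ≤ 1 / 2 := le_trans hB2L hsm
  obtain ⟨hM1l, hM1r, hM1n⟩ := mcs_inv_facts _ hB1h
  obtain ⟨hM2l, hM2r, hM2n⟩ := mcs_inv_facts _ hB2h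
  set M1 : Matrix (Fin n) (Fin n) ℝ := (1 - (θ * Δt) • A1)⁻¹ with hM1def
  set M2 : Matrix (Fin n) (Fin n) ℝ := (1 - (θ * Δt) • A2)⁻¹ with hM2def
  -- a generic solver identity for the implicit stages
  have solve : ∀ (M B : Matrix (Fin n) (Fin n) ℝ) (x : Fin n → ℝ), M * (1 - B) = 1 →
      M.mulVec (x - B.mulVec W) = W + M.mulVec (x - W) := by
    intro M B x hMB
    have h1 : x - B.mulVec W = (x - W) + (1 - B).mulVec W := by
      rw [Matrix.sub_mulVec, Matrix.one_mulVec]; abel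
    rw [h1, Matrix.mulVec_add, Matrix.mulVec_mulVec, hMB, Matrix.one_mulVec]; abel
  set u : Fin n → ℝ := A.mulVec W with hu
  set p : Fin n → ℝ := M2.mulVec (M1.mulVec u) with hp
  set q : Fin n → ℝ := p - u with hq
  set s : Fin n → ℝ := (θ * Δt * Δt) • ((AM + J).mulVec p)
      + ((1/2 - θ) * Δt * Δt) • (A.mulVec p) with hs
  set r : Fin n → ℝ := Δt • u + s with hr
  set g : Fin n → ℝ := M2.mulVec (M1.mulVec r) with hg
  set D : Fin n → ℝ := g - (r + ((θ * Δt) • A1).mulVec r + ((θ * Δt) • A2).mulVec r) with hD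
  clear_value M1 M2 u p q s r g D
  -- stage translations
  have hY0W : Y0 - W = Δt • u := by
    simp only [Y0, hu]; abel
  have hY1 : Y1 = W + M1.mulVec (Y0 - W) := by
    have : Y1 = M1.mulVec (Y0 - ((θ * Δt) • A1).mulVec W) := by
      simp only [Y1, Matrix.smul_mulVec, ← hM1def]
    rw [this, solve _ _ _ hM1l]
  have hY2 : Y2 = W + M2.mulVec (M1.mulVec (Y0 - W)) := by
    have h0 : Y2 = M2.mulVec (Y1 - ((θ * Δt) • A2).mulVec W) := by
      simp only [Y2, Matrix.smul_mulVec, ← hM2def]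
    rw [h0, solve _ _ _ hM2l, hY1]
    have hcan : W + M1.mulVec (Y0 - W) - W = M1.mulVec (Y0 - W) := by abel
    rw [hcan]
  have hY2W : Y2 - W = Δt • p := by
    rw [hY2, hY0W]
    simp only [Matrix.mulVec_smul, hp]
    abel
  have hYt0W : Ytilde0 - W = r := by
    have h0 : Ytilde0 = Y0 + (θ * Δt) • ((AM + J).mulVec (Y2 - W))
        + ((1/2 - θ) * Δt) • (A.mulVec (Y2 - W)) := by
      simp only [Ytilde0, Yhat0]
    rw [h0, hY2W]
    simp only [Matrix.mulVec_smul, smul_smul]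
    have h1 : Y0 - W = Δt • u := hY0W
    rw [hr, hs]
    have : Y0 = W + Δt • u := by rw [← h1]; abel
    rw [this]
    abel
  have hYt2 : Ytilde2 = W + g := by
    rw [hg]
    have h1 : Ytilde1 = W + M1.mulVec (Ytilde0 - W) := by
      have : Ytilde1 = M1.mulVec (Ytilde0 - ((θ * Δt) • A1).mulVec W) := by
        simp only [Ytilde1, Matrix.smul_mulVec, ← hM1def]
      rw [this, solve _ _ _ hM1l]
    have h0 : Ytilde2 = M2.mulVec (Ytilde1 - ((θ * Δt) • A2).mulVec W) := by
      simp only [Ytilde2, Matrix.smul_mulVec, ← hM2def]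
    rw [h0, solve _ _ _ hM2l, h1]
    have hcan : W + M1.mulVec (Ytilde0 - W) - W = M1.mulVec (Ytilde0 - W) := by abel
    rw [hcan, hYt0W]
  -- expansion identities for the resolvents
  have hm1exp : M1 = 1 + ((θ * Δt) • A1) * M1 := by
    have h : M1 - ((θ * Δt) • A1) * M1 = 1 := by
      have := hM1r
      rwa [sub_mul, one_mul] at this
    exact sub_eq_iff_eq_add.mp h
  have hm2exp : M2 = 1 + ((θ * Δt) • A2) * M2 := by
    have h : M2 - ((θ * Δt) • A2) * M2 = 1 := by
      have := hM2r
      rwa [sub_mul, one_mul] at this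
    exact sub_eq_iff_eq_add.mp h
  have hm1 : ∀ v : Fin n → ℝ, M1.mulVec v = v + ((θ * Δt) • A1).mulVec (M1.mulVec v) := by
    intro v
    conv_lhs => rw [hm1exp]
    rw [Matrix.add_mulVec, Matrix.one_mulVec, ← Matrix.mulVec_mulVec]
  have hm2 : ∀ v : Fin n → ℝ, M2.mulVec v = v + ((θ * Δt) • A2).mulVec (M2.mulVec v) := by
    intro v
    conv_lhs => rw [hm2exp]
    rw [Matrix.add_mulVec, Matrix.one_mulVec, ← Matrix.mulVec_mulVec]
  -- norm bounds on resolvent applications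
  have hm1v : ∀ v : Fin n → ℝ, ‖M1.mulVec v‖ ≤ 2 * ‖v‖ := fun v =>
    le_trans (Matrix.linfty_opNorm_mulVec _ _) (mul_le_mul_of_nonneg_right hM1n (norm_nonneg v))
  have hm2v : ∀ v : Fin n → ℝ, ‖M2.mulVec v‖ ≤ 2 * ‖v‖ := fun v =>
    le_trans (Matrix.linfty_opNorm_mulVec _ _) (mul_le_mul_of_nonneg_right hM2n (norm_nonneg v))
  have hB1v : ∀ v : Fin n → ℝ, ‖((θ * Δt) • A1).mulVec v‖ ≤ θ * Δt * L * ‖v‖ := fun v =>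
    le_trans (Matrix.linfty_opNorm_mulVec _ _) (mul_le_mul_of_nonneg_right hB1L (norm_nonneg v))
  have hB2v : ∀ v : Fin n → ℝ, ‖((θ * Δt) • A2).mulVec v‖ ≤ θ * Δt * L * ‖v‖ := fun v =>
    le_trans (Matrix.linfty_opNorm_mulVec _ _) (mul_le_mul_of_nonneg_right hB2L (norm_nonneg v))
  have hun : ‖u‖ ≤ L * ‖W‖ := by
    rw [hu]
    exact le_trans (Matrix.linfty_opNorm_mulVec _ _)
      (mul_le_mul_of_nonneg_right hAL (norm_nonneg W))
  have hpn : ‖p‖ ≤ 4 * L * ‖W‖ := by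
    rw [hp]
    calc ‖M2.mulVec (M1.mulVec u)‖ ≤ 2 * ‖M1.mulVec u‖ := hm2v _
      _ ≤ 2 * (2 * ‖u‖) := mul_le_mul_of_nonneg_left (hm1v u) (by norm_num)
      _ ≤ 2 * (2 * (L * ‖W‖)) := by
          have := mul_le_mul_of_nonneg_left hun (show (0:ℝ) ≤ 2 by norm_num)
          nlinarith [this]
      _ = 4 * L * ‖W‖ := by ring
  have hqn : ‖q‖ ≤ cq * Δt * ‖W‖ := by
    have hqe : q = ((θ * Δt) • A1).mulVec (M1.mulVec u) + ((θ * Δt) • A2).mulVec p := by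
      rw [hq]
      conv_lhs => rw [hp]
      conv_lhs => rw [hm2 (M1.mulVec u)]
      rw [← hp]
      conv_lhs => rw [hm1 u]
      abel
    rw [hqe]
    calc ‖((θ * Δt) • A1).mulVec (M1.mulVec u) + ((θ * Δt) • A2).mulVec p‖
        ≤ ‖((θ * Δt) • A1).mulVec (M1.mulVec u)‖ + ‖((θ * Δt) • A2).mulVec p‖ :=
          norm_add_le _ _
      _ ≤ θ * Δt * L * (2 * ‖u‖) + θ * Δt * L * ‖p‖ :=
          add_le_add
            (le_trans (hB1v _) (mul_le_mul_of_nonneg_left (hm1v u) (by positivity)))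
            (hB2v _)
      _ ≤ θ * Δt * L * (2 * (L * ‖W‖)) + θ * Δt * L * (4 * L * ‖W‖) := by gcongr
      _ = cq * Δt * ‖W‖ := by rw [hcq]; ring
  have hsn : ‖s‖ ≤ cs * (Δt * Δt) * ‖W‖ := by
    have e1 : ‖(θ * Δt * Δt) • ((AM + J).mulVec p)‖
        = (θ * Δt * Δt) * ‖(AM + J).mulVec p‖ := by
      rw [norm_smul, Real.norm_eq_abs, abs_of_pos (show (0:ℝ) < θ * Δt * Δt by positivity)]
    have e2 : ‖((1/2 - θ) * Δt * Δt) • (A.mulVec p)‖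
        = |1/2 - θ| * Δt * Δt * ‖A.mulVec p‖ := by
      rw [norm_smul, Real.norm_eq_abs, abs_mul, abs_mul, abs_of_pos hΔt]
    have b1 : ‖(AM + J).mulVec p‖ ≤ L * (4 * L * ‖W‖) :=
      le_trans (Matrix.linfty_opNorm_mulVec _ _)
        (mul_le_mul hAMJL hpn (norm_nonneg _) (le_of_lt hLpos))
    have b2 : ‖A.mulVec p‖ ≤ L * (4 * L * ‖W‖) :=
      le_trans (Matrix.linfty_opNorm_mulVec _ _)
        (mul_le_mul hAL hpn (norm_nonneg _) (le_of_lt hLpos))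
    have b1' := mul_le_mul_of_nonneg_left b1 (show (0:ℝ) ≤ θ * Δt * Δt by positivity)
    have b2' := mul_le_mul_of_nonneg_left b2 (show (0:ℝ) ≤ |1/2 - θ| * Δt * Δt by positivity)
    have hkey : (θ * Δt * Δt) * (L * (4 * L * ‖W‖))
        + |1/2 - θ| * Δt * Δt * (L * (4 * L * ‖W‖)) = cs * (Δt * Δt) * ‖W‖ := by
      rw [hcs]; ring
    have htr : ‖s‖ ≤ ‖(θ * Δt * Δt) • ((AM + J).mulVec p)‖
        + ‖((1/2 - θ) * Δt * Δt) • (A.mulVec p)‖ := by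
      rw [hs]; exact norm_add_le _ _
    rw [e1, e2] at htr
    calc ‖s‖ ≤ (θ * Δt * Δt) * ‖(AM + J).mulVec p‖
        + |1/2 - θ| * Δt * Δt * ‖A.mulVec p‖ := htr
      _ ≤ (θ * Δt * Δt) * (L * (4 * L * ‖W‖))
          + |1/2 - θ| * Δt * Δt * (L * (4 * L * ‖W‖)) := add_le_add b1' b2'
      _ = cs * (Δt * Δt) * ‖W‖ := hkey
  have hrn : ‖r‖ ≤ (L + cs) * Δt * ‖W‖ := by
    rw [hr]
    calc ‖Δt • u + s‖ ≤ ‖Δt • u‖ + ‖s‖ := norm_add_le _ _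
      _ ≤ Δt * (L * ‖W‖) + cs * (Δt * Δt) * ‖W‖ := by
          rw [norm_smul, Real.norm_eq_abs, abs_of_pos hΔt]
          gcongr
      _ ≤ Δt * (L * ‖W‖) + cs * (Δt * 1) * ‖W‖ := by gcongr
      _ = (L + cs) * Δt * ‖W‖ := by ring
  have hDn : ‖D‖ ≤ cD * Δt ^ 3 * ‖W‖ := by
    have hDe : D = ((θ * Δt) • A1).mulVec (M1.mulVec r - r)
        + ((θ * Δt) • A2).mulVec (g - r) := by
      rw [hD]
      conv_lhs => rw [hg]
      conv_lhs => rw [hm2 (M1.mulVec r)]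
      rw [← hg]
      conv_lhs => rw [hm1 r]
      rw [Matrix.mulVec_sub, Matrix.mulVec_sub]
      abel
    have h1 : ‖M1.mulVec r - r‖ ≤ θ * Δt * L * (2 * ‖r‖) := by
      have e : M1.mulVec r - r = ((θ * Δt) • A1).mulVec (M1.mulVec r) := by
        conv_lhs => rw [hm1 r]
        abel
      rw [e]
      exact le_trans (hB1v _) (mul_le_mul_of_nonneg_left (hm1v r) (by positivity))
    have h2 : ‖g - r‖ ≤ θ * Δt * L * (2 * ‖r‖) + θ * Δt * L * (4 * ‖r‖) := by
      have e : g - r = ((θ * Δt) • A1).mulVec (M1.mulVec r) + ((θ * Δt) • A2).mulVec g := by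
        conv_lhs => rw [hg]
        conv_lhs => rw [hm2 (M1.mulVec r)]
        rw [← hg]
        conv_lhs => rw [hm1 r]
        abel
      have h2a : ‖((θ * Δt) • A1).mulVec (M1.mulVec r)‖ ≤ θ * Δt * L * (2 * ‖r‖) :=
        le_trans (hB1v _) (mul_le_mul_of_nonneg_left (hm1v r) (by positivity))
      have hgr : ‖g‖ ≤ 4 * ‖r‖ := by
        rw [hg]
        calc ‖M2.mulVec (M1.mulVec r)‖ ≤ 2 * ‖M1.mulVec r‖ := hm2v _
          _ ≤ 2 * (2 * ‖r‖) := by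
              exact mul_le_mul_of_nonneg_left (hm1v r) (by norm_num)
          _ = 4 * ‖r‖ := by ring
      have h2b : ‖((θ * Δt) • A2).mulVec g‖ ≤ θ * Δt * L * (4 * ‖r‖) :=
        le_trans (hB2v _) (mul_le_mul_of_nonneg_left hgr (by positivity))
      rw [e]
      exact le_trans (norm_add_le _ _) (add_le_add h2a h2b)
    have hrn' : ‖r‖ ≤ (L + cs) * Δt * ‖W‖ := hrn
    rw [hDe]
    calc ‖((θ * Δt) • A1).mulVec (M1.mulVec r - r) + ((θ * Δt) • A2).mulVec (g - r)‖
        ≤ ‖((θ * Δt) • A1).mulVec (M1.mulVec r - r)‖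
          + ‖((θ * Δt) • A2).mulVec (g - r)‖ := norm_add_le _ _
      _ ≤ θ * Δt * L * (θ * Δt * L * (2 * ‖r‖))
          + θ * Δt * L * (θ * Δt * L * (2 * ‖r‖) + θ * Δt * L * (4 * ‖r‖)) :=
          add_le_add
            (le_trans (hB1v _) (mul_le_mul_of_nonneg_left h1 (by positivity)))
            (le_trans (hB2v _) (mul_le_mul_of_nonneg_left h2 (by positivity)))
      _ = 8 * θ^2 * L^2 * (Δt * Δt) * ‖r‖ := by ring
      _ ≤ 8 * θ^2 * L^2 * (Δt * Δt) * ((L + cs) * Δt * ‖W‖) := by gcongr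
      _ = cD * Δt ^ 3 * ‖W‖ := by rw [hcD]; ring
  -- Taylor polynomial applied to W
  have hT : (1 + (Δt • A) + (2 : ℝ)⁻¹ • ((Δt • A) * (Δt • A))).mulVec W
      = W + Δt • u + (2⁻¹ * (Δt * Δt)) • (A.mulVec u) := by
    simp only [Matrix.add_mulVec, Matrix.one_mulVec, ← Matrix.mulVec_mulVec,
      Matrix.smul_mulVec, Matrix.mulVec_smul, smul_smul]
    rw [show A.mulVec W = u from hu.symm]
  have hGr : g = r + ((θ * Δt) • A1).mulVec r + ((θ * Δt) • A2).mulVec r + D := by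
    rw [hD]; abel
  have hB1r : ((θ * Δt) • A1).mulVec r
      = (θ * Δt * Δt) • (A1.mulVec u) + ((θ * Δt) • A1).mulVec s := by
    conv_lhs => rw [hr]
    rw [Matrix.mulVec_add, Matrix.mulVec_smul, Matrix.smul_mulVec, smul_smul]
    module
  have hB2r : ((θ * Δt) • A2).mulVec r
      = (θ * Δt * Δt) • (A2.mulVec u) + ((θ * Δt) • A2).mulVec s := by
    conv_lhs => rw [hr]
    rw [Matrix.mulVec_add, Matrix.mulVec_smul, Matrix.smul_mulVec, smul_smul]
    module
  have hpu : p = u + q := by rw [hq]; abel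
  have hsq : s = ((θ * Δt * Δt) • ((AM + J).mulVec u) + ((1/2 - θ) * Δt * Δt) • (A.mulVec u))
      + ((θ * Δt * Δt) • ((AM + J).mulVec q) + ((1/2 - θ) * Δt * Δt) • (A.mulVec q)) := by
    rw [hs, hpu]
    simp only [Matrix.mulVec_add, smul_add]
    abel
  have hAu : A.mulVec u = A1.mulVec u + A2.mulVec u + (AM + J).mulVec u := by
    have : A = A1 + A2 + (AM + J) := by simp only [A]; abel
    rw [this, Matrix.add_mulVec, Matrix.add_mulVec]
  have key2 : (1 + (Δt • A) + (2 : ℝ)⁻¹ • ((Δt • A) * (Δt • A))).mulVec W - (W + g)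
      = -((θ * Δt * Δt) • ((AM + J).mulVec q) + ((1/2 - θ) * Δt * Δt) • (A.mulVec q)
          + ((θ * Δt) • A1).mulVec s + ((θ * Δt) • A2).mulVec s + D) := by
    rw [hT, hGr, hB1r, hB2r, hr, hsq, hAu]
    module
  have key : (NormedSpace.exp (Δt • A)).mulVec W - Ytilde2
      = (NormedSpace.exp (Δt • A)
          - (1 + (Δt • A) + (2 : ℝ)⁻¹ • ((Δt • A) * (Δt • A)))).mulVec W
        - ((θ * Δt * Δt) • ((AM + J).mulVec q) + ((1/2 - θ) * Δt * Δt) • (A.mulVec q)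
            + ((θ * Δt) • A1).mulVec s + ((θ * Δt) • A2).mulVec s + D) := by
    have e0 : (NormedSpace.exp (Δt • A)).mulVec W - Ytilde2
        = (NormedSpace.exp (Δt • A)
            - (1 + (Δt • A) + (2 : ℝ)⁻¹ • ((Δt • A) * (Δt • A)))).mulVec W
          + ((1 + (Δt • A) + (2 : ℝ)⁻¹ • ((Δt • A) * (Δt • A))).mulVec W - (W + g)) := by
      rw [Matrix.sub_mulVec, hYt2]
      abel
    rw [e0, key2]
    abel
  -- final estimate
  -- final estimate
  rw [key]
  have hXn : ‖Δt • A‖ ≤ Δt * L := by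
    rw [norm_smul, Real.norm_eq_abs, abs_of_pos hΔt]
    have : ‖A‖ ≤ L := hAL
    exact mul_le_mul_of_nonneg_left this (le_of_lt hΔt)
  have hE0 : ‖(NormedSpace.exp (Δt • A)
      - (1 + (Δt • A) + (2 : ℝ)⁻¹ • ((Δt • A) * (Δt • A)))).mulVec W‖
      ≤ L^3 * Real.exp L * (Δt ^ 3 * ‖W‖) := by
    refine le_trans (Matrix.linfty_opNorm_mulVec _ _) ?_
    have h1 := mcs_exp_remainder (Δt • A)
    have h2 : ‖Δt • A‖ ^ 3 ≤ (Δt * L) ^ 3 := pow_le_pow_left₀ (norm_nonneg _) hXn 3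
    have h3 : Real.exp ‖Δt • A‖ ≤ Real.exp L := by
      apply Real.exp_le_exp.mpr
      refine le_trans hXn ?_
      nlinarith
    have hh : ‖Δt • A‖ ^ 3 * Real.exp ‖Δt • A‖ ≤ (Δt * L) ^ 3 * Real.exp L :=
      mul_le_mul h2 h3 (le_of_lt (Real.exp_pos _)) (by positivity)
    calc ‖NormedSpace.exp (Δt • A)
        - (1 + (Δt • A) + (2 : ℝ)⁻¹ • ((Δt • A) * (Δt • A)))‖ * ‖W‖
        ≤ ((Δt * L) ^ 3 * Real.exp L) * ‖W‖ :=
          mul_le_mul_of_nonneg_right (le_trans h1 hh) (norm_nonneg W)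
      _ = L^3 * Real.exp L * (Δt ^ 3 * ‖W‖) := by ring
  have hqmul1 : ‖(AM + J).mulVec q‖ ≤ L * (cq * Δt * ‖W‖) :=
    le_trans (Matrix.linfty_opNorm_mulVec _ _)
      (mul_le_mul hAMJL hqn (norm_nonneg _) (le_of_lt hLpos))
  have hqmul2 : ‖A.mulVec q‖ ≤ L * (cq * Δt * ‖W‖) :=
    le_trans (Matrix.linfty_opNorm_mulVec _ _)
      (mul_le_mul hAL hqn (norm_nonneg _) (le_of_lt hLpos))
  have ht1 : ‖(θ * Δt * Δt) • ((AM + J).mulVec q)‖ ≤ θ * L * cq * (Δt ^ 3 * ‖W‖) := by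
    rw [norm_smul, Real.norm_eq_abs, abs_of_pos (show (0:ℝ) < θ * Δt * Δt by positivity)]
    calc (θ * Δt * Δt) * ‖(AM + J).mulVec q‖
        ≤ (θ * Δt * Δt) * (L * (cq * Δt * ‖W‖)) :=
          mul_le_mul_of_nonneg_left hqmul1 (by positivity)
      _ = θ * L * cq * (Δt ^ 3 * ‖W‖) := by ring
  have ht2 : ‖((1/2 - θ) * Δt * Δt) • (A.mulVec q)‖
      ≤ |1/2 - θ| * L * cq * (Δt ^ 3 * ‖W‖) := by
    rw [norm_smul, Real.norm_eq_abs, abs_mul, abs_mul, abs_of_pos hΔt]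
    calc |1/2 - θ| * Δt * Δt * ‖A.mulVec q‖
        ≤ |1/2 - θ| * Δt * Δt * (L * (cq * Δt * ‖W‖)) :=
          mul_le_mul_of_nonneg_left hqmul2 (by positivity)
      _ = |1/2 - θ| * L * cq * (Δt ^ 3 * ‖W‖) := by ring
  have ht3 : ‖((θ * Δt) • A1).mulVec s‖ ≤ θ * L * cs * (Δt ^ 3 * ‖W‖) := by
    calc ‖((θ * Δt) • A1).mulVec s‖ ≤ θ * Δt * L * ‖s‖ := hB1v _
      _ ≤ θ * Δt * L * (cs * (Δt * Δt) * ‖W‖) := by gcongr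
      _ = θ * L * cs * (Δt ^ 3 * ‖W‖) := by ring
  have ht4 : ‖((θ * Δt) • A2).mulVec s‖ ≤ θ * L * cs * (Δt ^ 3 * ‖W‖) := by
    calc ‖((θ * Δt) • A2).mulVec s‖ ≤ θ * Δt * L * ‖s‖ := hB2v _
      _ ≤ θ * Δt * L * (cs * (Δt * Δt) * ‖W‖) := by gcongr
      _ = θ * L * cs * (Δt ^ 3 * ‖W‖) := by ring
  have ht5 : ‖D‖ ≤ cD * (Δt ^ 3 * ‖W‖) := by
    refine le_trans hDn (le_of_eq ?_); ring
  have htri : ‖(NormedSpace.exp (Δt • A)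
      - (1 + (Δt • A) + (2 : ℝ)⁻¹ • ((Δt • A) * (Δt • A)))).mulVec W
      - ((θ * Δt * Δt) • ((AM + J).mulVec q) + ((1/2 - θ) * Δt * Δt) • (A.mulVec q)
          + ((θ * Δt) • A1).mulVec s + ((θ * Δt) • A2).mulVec s + D)‖
      ≤ ‖(NormedSpace.exp (Δt • A)
          - (1 + (Δt • A) + (2 : ℝ)⁻¹ • ((Δt • A) * (Δt • A)))).mulVec W‖
        + (‖(θ * Δt * Δt) • ((AM + J).mulVec q)‖ + ‖((1/2 - θ) * Δt * Δt) • (A.mulVec q)‖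
            + ‖((θ * Δt) • A1).mulVec s‖ + ‖((θ * Δt) • A2).mulVec s‖ + ‖D‖) := by
    refine le_trans (norm_sub_le _ _) ?_
    gcongr
    refine le_trans (norm_add_le _ _) ?_
    gcongr
    refine le_trans (norm_add_le _ _) ?_
    gcongr
    refine le_trans (norm_add_le _ _) ?_
    gcongr
    exact norm_add_le _ _
  refine le_trans htri ?_
  have : L^3 * Real.exp L * (Δt ^ 3 * ‖W‖) + (θ * L * cq * (Δt ^ 3 * ‖W‖)
      + |1/2 - θ| * L * cq * (Δt ^ 3 * ‖W‖) + θ * L * cs * (Δt ^ 3 * ‖W‖)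
      + θ * L * cs * (Δt ^ 3 * ‖W‖) + cD * (Δt ^ 3 * ‖W‖))
      = (L^3 * Real.exp L + θ * L * cq + |1/2 - θ| * L * cq + 2 * (θ * L * cs) + cD) * ‖W‖
        * Δt ^ 3 := by ring
  have hsum2 := add_le_add hE0 (add_le_add (add_le_add (add_le_add (add_le_add ht1 ht2) ht3) ht4) ht5)
  exact le_trans hsum2 this.le
end

section
/- Let A^{(J)} be the matrix with entries (A^{(J)})_{(k,l),(i,j)} = λ f̄((i−k)Δx1, (j−l)Δx2) Δx1 Δx2 for the bivariate normal density f̄. Then the maximum (row-sum) norm of A^{(J)} satisfies ‖A^{(J)}‖_∞ ≤ λ · Σ_{i,j∈ℤ} f̄(iΔx1, jΔx2)Δx1Δx2, and this bound is finite and converges to λ as Δx1, Δx2 → 0; in particular ‖A^{(J)}‖_∞ ≤ λ(1 + C(Δx1 + Δx2)) for a constant C depending only on f̄. -/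
open Real Filter

open MeasureTheory


lemma cells_disjoint {Δ : ℝ} (hΔ : 0 < Δ) :
    Pairwise (Function.onFun Disjoint (fun i : ℤ => Set.Ico ((i:ℝ) * Δ) ((i+1) * Δ))) := by
  intro i j hij
  have key : ∀ i j : ℤ, i < j → Disjoint (Set.Ico ((i:ℝ) * Δ) ((i+1) * Δ))
      (Set.Ico ((j:ℝ) * Δ) ((j+1) * Δ)) := by
    intro i j h
    apply Set.Ico_disjoint_Ico.mpr
    have h1 : ((i:ℝ)+1) * Δ ≤ (j:ℝ) * Δ := by
      apply mul_le_mul_of_nonneg_right _ hΔ.le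
      have : (i:ℝ) + 1 ≤ j := by exact_mod_cast h
      linarith
    calc min (((i:ℝ)+1) * Δ) (((j:ℝ)+1) * Δ) ≤ ((i:ℝ)+1) * Δ := min_le_left _ _
      _ ≤ max ((i:ℝ) * Δ) ((j:ℝ) * Δ) := h1.trans (le_max_right _ _)
  rcases lt_or_gt_of_ne hij with h | h
  · exact key i j h
  · exact (key j i h).symm

lemma cells_cover {Δ : ℝ} (hΔ : 0 < Δ) :
    (⋃ i : ℤ, Set.Ico ((i:ℝ) * Δ) ((i+1) * Δ)) = Set.univ := by
  ext x
  simp only [Set.mem_iUnion, Set.mem_Ico, Set.mem_univ, iff_true]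
  refine ⟨⌊x / Δ⌋, ?_, ?_⟩
  · rw [← le_div_iff₀ hΔ]; exact Int.floor_le _
  · rw [← div_lt_iff₀ hΔ]; push_cast; exact Int.lt_floor_add_one _

lemma cells_hasSum {f : ℝ → ℝ} {Δ : ℝ} (hΔ : 0 < Δ) (hi : Integrable f) :
    HasSum (fun i : ℤ => ∫ x in Set.Ico ((i:ℝ) * Δ) ((i+1) * Δ), f x) (∫ x, f x) := by
  have := hasSum_integral_iUnion (μ := volume) (f := f)
    (s := fun i : ℤ => Set.Ico ((i:ℝ) * Δ) ((i+1) * Δ))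
    (fun i => measurableSet_Ico) (cells_disjoint hΔ)
    (by rw [cells_cover hΔ]; exact hi.integrableOn)
  rwa [cells_cover hΔ, setIntegral_univ] at this

lemma rect1d {f : ℝ → ℝ} {Δ : ℝ} (hΔ : 0 < Δ) (hd : Differentiable ℝ f)
    (hi : Integrable f) (hi' : Integrable (deriv f)) :
    Summable (fun i : ℤ => f ((i:ℝ) * Δ) * Δ) ∧
    |(∑' i : ℤ, f ((i:ℝ) * Δ) * Δ) - ∫ x, f x| ≤ Δ * ∫ x, |deriv f x| := by
  set s : ℤ → Set ℝ := fun i => Set.Ico ((i:ℝ) * Δ) ((i+1) * Δ) with hs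
  have hvol : ∀ i : ℤ, volume (s i) = ENNReal.ofReal Δ := by
    intro i
    rw [hs]; simp only [Real.volume_Ico]
    congr 1; ring
  have habs : Integrable (fun x => |deriv f x|) := hi'.abs
  -- per-cell bound on |f x - f (i Δ)|
  have key : ∀ (i : ℤ), ∀ x ∈ s i, |f x - f ((i:ℝ) * Δ)| ≤ ∫ t in s i, |deriv f t| := by
    intro i x hx
    obtain ⟨hx1, hx2⟩ := hx
    have hftc : ∫ t in ((i:ℝ)*Δ)..x, deriv f t = f x - f ((i:ℝ)*Δ) :=
      intervalIntegral.integral_deriv_eq_sub (fun t _ => hd.differentiableAt)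
        hi'.intervalIntegrable
    rw [← hftc]
    calc |∫ t in ((i:ℝ)*Δ)..x, deriv f t| ≤ ∫ t in ((i:ℝ)*Δ)..x, |deriv f t| :=
          intervalIntegral.abs_integral_le_integral_abs hx1
      _ = ∫ t in Set.Ioc ((i:ℝ)*Δ) x, |deriv f t| :=
          intervalIntegral.integral_of_le hx1
      _ ≤ ∫ t in s i, |deriv f t| := by
          apply setIntegral_mono_set habs.integrableOn
          · exact Filter.Eventually.of_forall fun t => abs_nonneg _
          · apply HasSubset.Subset.eventuallyLE
            intro t ht
            exact ⟨ht.1.le, lt_of_le_of_lt ht.2 hx2⟩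
  -- per-cell error bound
  have herr : ∀ i : ℤ, |f ((i:ℝ) * Δ) * Δ - ∫ x in s i, f x| ≤ Δ * ∫ t in s i, |deriv f t| := by
    intro i
    have hconst : f ((i:ℝ)*Δ) * Δ = ∫ _x in s i, f ((i:ℝ)*Δ) := by
      rw [setIntegral_const, measureReal_def, hvol, ENNReal.toReal_ofReal hΔ.le, smul_eq_mul, mul_comm]
    have hIc : IntegrableOn (fun _x : ℝ => f ((i:ℝ)*Δ)) (s i) := by
      exact integrableOn_const (by rw [hvol]; exact ENNReal.ofReal_ne_top)
    rw [hconst, ← integral_sub hIc hi.integrableOn]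
    have := norm_setIntegral_le_of_norm_le_const_ae' (μ := volume) (s := s i)
      (f := fun x => f ((i:ℝ)*Δ) - f x) (C := ∫ t in s i, |deriv f t|)
      (by rw [hvol i]; exact ENNReal.ofReal_lt_top)
      (Filter.Eventually.of_forall fun x hx => by
        rw [Real.norm_eq_abs, abs_sub_comm]; exact key i x hx)
    rw [Real.norm_eq_abs, measureReal_def, hvol i, ENNReal.toReal_ofReal hΔ.le] at this
    linarith [this]
  have hcf : HasSum (fun i : ℤ => ∫ x in s i, f x) (∫ x, f x) := cells_hasSum hΔ hi
  have hca : HasSum (fun i : ℤ => ∫ x in s i, |deriv f x|) (∫ x, |deriv f x|) :=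
    cells_hasSum hΔ habs
  -- summability
  have hsumB : Summable (fun i : ℤ => Δ * ∫ t in s i, |deriv f t|) :=
    hca.summable.mul_left Δ
  have hsumErr : Summable (fun i : ℤ => f ((i:ℝ)*Δ) * Δ - ∫ x in s i, f x) := by
    rw [← summable_abs_iff]
    apply Summable.of_nonneg_of_le (fun i => abs_nonneg _) herr hsumB
  have hsummable : Summable (fun i : ℤ => f ((i:ℝ) * Δ) * Δ) := by
    have := hsumErr.add hcf.summable
    simpa using this
  refine ⟨hsummable, ?_⟩
  have htsub : (∑' i : ℤ, f ((i:ℝ) * Δ) * Δ) - ∫ x, f x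
      = ∑' i : ℤ, (f ((i:ℝ)*Δ) * Δ - ∫ x in s i, f x) := by
    rw [Summable.tsum_sub hsummable hcf.summable, hcf.tsum_eq]
  rw [htsub]
  have habs_sum : Summable (fun i : ℤ => |f ((i:ℝ)*Δ) * Δ - ∫ x in s i, f x|) :=
    Summable.of_nonneg_of_le (fun i => abs_nonneg _) herr hsumB
  calc |∑' i : ℤ, (f ((i:ℝ)*Δ) * Δ - ∫ x in s i, f x)|
      ≤ ∑' i : ℤ, |f ((i:ℝ)*Δ) * Δ - ∫ x in s i, f x| := by
        have h2 : Summable (fun i : ℤ => ‖f ((i:ℝ)*Δ) * Δ - ∫ x in s i, f x‖) := by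
          simpa only [Real.norm_eq_abs] using habs_sum
        have h3 := norm_tsum_le_tsum_norm h2
        simpa only [Real.norm_eq_abs] using h3
    _ ≤ ∑' i : ℤ, Δ * ∫ t in s i, |deriv f t| := Summable.tsum_le_tsum herr habs_sum hsumB
    _ = Δ * ∫ x, |deriv f x| := by rw [tsum_mul_left, hca.tsum_eq]


noncomputable def gauss (b m y : ℝ) : ℝ := Real.exp (-(b * (y - m)^2))

noncomputable def dgauss (b m y : ℝ) : ℝ := gauss b m y * (-(2*b*(y-m)))

noncomputable def W (b : ℝ) : ℝ := ∫ t : ℝ, |dgauss b 0 t|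

lemma gauss_pos (b m y : ℝ) : 0 < gauss b m y := Real.exp_pos _

lemma W_nonneg (b : ℝ) : 0 ≤ W b := integral_nonneg fun t => abs_nonneg _

lemma gauss_hasDerivAt (b m y : ℝ) : HasDerivAt (gauss b m) (dgauss b m y) y := by
  have h0 : HasDerivAt (fun y : ℝ => y - m) 1 y := (hasDerivAt_id y).sub_const m
  have h1 : HasDerivAt (fun y : ℝ => (y - m)^2) (2*(y-m)) y := by
    simpa using h0.fun_pow 2
  have h2 : HasDerivAt (fun y : ℝ => -(b*(y-m)^2)) (-(2*b*(y-m))) y := by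
    have := (h1.const_mul b).fun_neg
    simpa [mul_comm, mul_assoc, mul_left_comm] using this
  unfold gauss dgauss gauss
  simpa using h2.exp

lemma differentiable_gauss (b m : ℝ) : Differentiable ℝ (gauss b m) :=
  fun y => (gauss_hasDerivAt b m y).differentiableAt

lemma deriv_gauss (b m : ℝ) : deriv (gauss b m) = dgauss b m := by
  funext y; exact (gauss_hasDerivAt b m y).deriv

lemma integrable_gauss {b : ℝ} (hb : 0 < b) (m : ℝ) : Integrable (gauss b m) := by
  have h := (integrable_exp_neg_mul_sq hb).comp_sub_right m
  unfold gauss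
  simpa [neg_mul] using h

lemma integral_gauss_eq {b : ℝ} (hb : 0 < b) (m : ℝ) :
    ∫ y, gauss b m y = Real.sqrt (π / b) := by
  have h : (fun y => gauss b m y) = fun y => (fun t => Real.exp (-b * t^2)) (y - m) := by
    funext y; simp [gauss, neg_mul]
  rw [h, integral_sub_right_eq_self (fun t => Real.exp (-b * t^2)) m, integral_gaussian]

lemma continuous_dgauss (b m : ℝ) : Continuous (dgauss b m) := by
  unfold dgauss gauss; fun_prop

lemma integrable_dgauss {b : ℝ} (hb : 0 < b) (m : ℝ) : Integrable (dgauss b m) := by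
  have h0 : Integrable (fun t : ℝ => |t| * Real.exp (-b * t^2)) := by
    have := (integrable_mul_exp_neg_mul_sq hb).abs
    simpa [abs_mul, Real.abs_exp] using this
  have h1 : Integrable (fun t : ℝ => 2*b*(|t| * Real.exp (-b * t^2))) :=
    h0.const_mul _
  have h2 := h1.comp_sub_right m
  apply h2.mono' (continuous_dgauss b m).aestronglyMeasurable
  apply Filter.Eventually.of_forall
  intro y
  simp only [dgauss, gauss, Real.norm_eq_abs, abs_mul]
  rw [Real.abs_exp]
  have hb2 : |(-(2*b*(y-m)))| = 2*b*|y-m| := by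
    rw [abs_neg, abs_mul, abs_mul]
    rw [abs_of_nonneg (by norm_num : (0:ℝ) ≤ 2), abs_of_nonneg hb.le]
  rw [hb2, neg_mul]
  ring_nf
  apply le_of_eq
  ring

lemma integral_abs_dgauss {b : ℝ} (m : ℝ) :
    ∫ y, |dgauss b m y| = W b := by
  have h : (fun y => |dgauss b m y|) = fun y => (fun t => |dgauss b 0 t|) (y - m) := by
    funext y; simp [dgauss, gauss]
  rw [h, integral_sub_right_eq_self (fun t => |dgauss b 0 t|) m, W]

lemma rect_gauss {α b m Δ : ℝ} (hα : 0 ≤ α) (hb : 0 < b) (hΔ : 0 < Δ) :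
    Summable (fun i : ℤ => α * gauss b m ((i:ℝ) * Δ) * Δ) ∧
    |(∑' i : ℤ, α * gauss b m ((i:ℝ) * Δ) * Δ) - α * Real.sqrt (π / b)| ≤ Δ * (α * W b) := by
  have hdiff : Differentiable ℝ (fun y => α * gauss b m y) :=
    (differentiable_gauss b m).const_mul α
  have hderiv : deriv (fun y => α * gauss b m y) = fun y => α * dgauss b m y := by
    funext y
    rw [deriv_const_mul α ((differentiable_gauss b m) y), deriv_gauss]
  have hint : Integrable (fun y => α * gauss b m y) := (integrable_gauss hb m).const_mul α
  have hint' : Integrable (deriv (fun y => α * gauss b m y)) := by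
    rw [hderiv]; exact (integrable_dgauss hb m).const_mul α
  have h := rect1d hΔ hdiff hint hint'
  have he1 : ∫ y, α * gauss b m y = α * Real.sqrt (π / b) := by
    rw [integral_const_mul, integral_gauss_eq hb]
  have he2 : ∫ y, |deriv (fun y => α * gauss b m y) y| = α * W b := by
    rw [hderiv]
    have : (fun y => |α * dgauss b m y|) = fun y => α * |dgauss b m y| := by
      funext y; rw [abs_mul, abs_of_nonneg hα]
    simp only [this]
    rw [integral_const_mul, integral_abs_dgauss]
  rw [he1, he2] at h
  exact h

set_option maxHeartbeats 1000000 in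
theorem main_aux (γ1 γ2 δ1 δ2 ρ : ℝ) (hδ1 : 0 < δ1) (hδ2 : 0 < δ2) (hρ : |ρ| < 1)
    (F : ℝ → ℝ → ℝ)
    (hF : ∀ x y, F x y = (2 * π * δ1 * δ2 * Real.sqrt (1 - ρ ^ 2))⁻¹ *
        Real.exp (-((((x - γ1) / δ1) ^ 2 + ((y - γ2) / δ2) ^ 2 -
          2 * ρ * ((x - γ1) / δ1) * ((y - γ2) / δ2)) / (2 * (1 - ρ ^ 2))))) :
    (∀ x y, 0 < F x y) ∧
    ∃ C0 : ℝ, 0 ≤ C0 ∧ ∀ Δ1 Δ2 : ℝ, 0 < Δ1 → Δ1 ≤ 1 → 0 < Δ2 → Δ2 ≤ 1 →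
      Summable (fun ij : ℤ × ℤ => F ((ij.1 : ℝ) * Δ1) ((ij.2 : ℝ) * Δ2) * Δ1 * Δ2) ∧
      |(∑' ij : ℤ × ℤ, F ((ij.1 : ℝ) * Δ1) ((ij.2 : ℝ) * Δ2) * Δ1 * Δ2) - 1|
        ≤ C0 * (Δ1 + Δ2) := by
  have hπ := Real.pi_pos
  have hρ' := abs_lt.mp hρ
  have hρ2 : ρ ^ 2 < 1 := by nlinarith [hρ'.1, hρ'.2]
  have hs : (0:ℝ) < 1 - ρ ^ 2 := by linarith
  have hsq : 0 < Real.sqrt (1 - ρ ^ 2) := Real.sqrt_pos.mpr hs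
  set c : ℝ := (2 * π * δ1 * δ2 * Real.sqrt (1 - ρ ^ 2))⁻¹ with hc_def
  have hc : 0 < c := by rw [hc_def]; positivity
  set b1 : ℝ := (2 * δ1 ^ 2)⁻¹ with hb1_def
  set b2 : ℝ := (2 * (1 - ρ ^ 2) * δ2 ^ 2)⁻¹ with hb2_def
  have hb1 : 0 < b1 := by rw [hb1_def]; positivity
  have hb2 : 0 < b2 := by rw [hb2_def]; positivity
  set a1 : ℝ := (2 * (1 + |ρ|) * δ1 ^ 2)⁻¹ with ha1_def
  set a2 : ℝ := (2 * (1 + |ρ|) * δ2 ^ 2)⁻¹ with ha2_def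
  have habs : (0:ℝ) ≤ |ρ| := abs_nonneg ρ
  have ha1 : 0 < a1 := by rw [ha1_def]; positivity
  have ha2 : 0 < a2 := by rw [ha2_def]; positivity
  set mm : ℝ → ℝ := fun x => γ2 + δ2 * ρ * ((x - γ1) / δ1) with hm_def
  -- key factorization
  have hkey : ∀ x y, F x y = c * gauss b1 γ1 x * gauss b2 (mm x) y := by
    intro x y
    rw [hF]
    simp only [gauss]
    rw [mul_assoc c, ← Real.exp_add]
    congr 2
    rw [hb1_def, hb2_def, hm_def]
    have h1 : (1:ℝ) - ρ ^ 2 ≠ 0 := ne_of_gt hs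
    field_simp
    ring
  have hFpos : ∀ x y, 0 < F x y := by
    intro x y
    rw [hkey]
    exact mul_pos (mul_pos hc (gauss_pos _ _ _)) (gauss_pos _ _ _)
  -- envelope
  have henv : ∀ x y, F x y ≤ c * gauss a1 γ1 x * gauss a2 γ2 y := by
    intro x y
    rw [hF, mul_assoc c]
    have hcc : gauss a1 γ1 x * gauss a2 γ2 y
        = Real.exp (-(a1 * (x - γ1) ^ 2) + -(a2 * (y - γ2) ^ 2)) := by
      rw [gauss, gauss, ← Real.exp_add]
    rw [hcc]
    apply mul_le_mul_of_nonneg_left _ hc.le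
    apply Real.exp_le_exp.mpr
    set u : ℝ := (x - γ1) / δ1 with hu
    set v : ℝ := (y - γ2) / δ2 with hv
    have hx' : (x - γ1) ^ 2 = u ^ 2 * δ1 ^ 2 := by
      rw [hu]; field_simp
    have hy' : (y - γ2) ^ 2 = v ^ 2 * δ2 ^ 2 := by
      rw [hv]; field_simp
    rw [hx', hy', ha1_def, ha2_def]
    have e1 : (2 * (1 + |ρ|) * δ1 ^ 2)⁻¹ * (u ^ 2 * δ1 ^ 2) = u ^ 2 / (2 * (1 + |ρ|)) := by
      field_simp
    have e2 : (2 * (1 + |ρ|) * δ2 ^ 2)⁻¹ * (v ^ 2 * δ2 ^ 2) = v ^ 2 / (2 * (1 + |ρ|)) := by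
      field_simp
    rw [e1, e2]
    rw [← neg_add, neg_le_neg_iff, ← add_div]
    -- (u^2+v^2)/(2(1+|ρ|)) ≤ (u^2+v^2-2ρuv)/(2(1-ρ^2))
    rw [div_le_div_iff₀ (by positivity) (by positivity)]
    have hmain : 2 * ρ * u * v ≤ |ρ| * (u ^ 2 + v ^ 2) := by
      calc 2 * ρ * u * v ≤ |2 * ρ * u * v| := le_abs_self _
        _ = |ρ| * (2 * (|u| * |v|)) := by
            rw [abs_mul, abs_mul, abs_mul]
            rw [abs_of_nonneg (by norm_num : (0:ℝ) ≤ 2)]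
            ring
        _ ≤ |ρ| * (u ^ 2 + v ^ 2) := by
            apply mul_le_mul_of_nonneg_left _ habs
            nlinarith [sq_nonneg (|u| - |v|), sq_abs u, sq_abs v]
    have hsqabs : ρ ^ 2 = |ρ| ^ 2 := (sq_abs ρ).symm
    clear_value u v
    have key2 : 0 ≤ |ρ| * (u ^ 2 + v ^ 2) - 2 * ρ * u * v := by linarith
    have key3 : 0 ≤ (1 + |ρ|) * (|ρ| * (u ^ 2 + v ^ 2) - 2 * ρ * u * v) :=
      mul_nonneg (by linarith) key2
    rw [hsqabs]
    nlinarith [key3]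
  -- constant identity
  have hpb1 : π / b1 = π * (2 * δ1 ^ 2) := by
    rw [hb1_def, div_eq_mul_inv, inv_inv]
  have hpb2 : π / b2 = π * (2 * (1 - ρ ^ 2) * δ2 ^ 2) := by
    rw [hb2_def, div_eq_mul_inv, inv_inv]
  have hprod : Real.sqrt (π / b2) * Real.sqrt (π / b1)
      = 2 * π * δ1 * δ2 * Real.sqrt (1 - ρ ^ 2) := by
    rw [← Real.sqrt_mul (by positivity) ]
    have h2 : π / b2 * (π / b1) = (2 * π * δ1 * δ2 * Real.sqrt (1 - ρ ^ 2)) ^ 2 := by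
      rw [hpb1, hpb2]
      have h := Real.sq_sqrt hs.le
      linear_combination (-(4 * π ^ 2 * δ1 ^ 2 * δ2 ^ 2)) * h
    rw [h2, Real.sqrt_sq (by positivity)]
  have hc1 : c * Real.sqrt (π / b2) * Real.sqrt (π / b1) = 1 := by
    rw [mul_assoc, hprod, hc_def]
    exact inv_mul_cancel₀ (by positivity)
  have hsq2 : (0:ℝ) ≤ Real.sqrt (π / b2) := Real.sqrt_nonneg _
  have hsq1 : (0:ℝ) ≤ Real.sqrt (π / b1) := Real.sqrt_nonneg _
  -- row lemma
  have hrow : ∀ (Δ2 : ℝ), 0 < Δ2 → ∀ x : ℝ,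
      Summable (fun j : ℤ => F x ((j : ℝ) * Δ2) * Δ2) ∧
      |(∑' j : ℤ, F x ((j : ℝ) * Δ2) * Δ2) - c * gauss b1 γ1 x * Real.sqrt (π / b2)|
        ≤ Δ2 * (c * gauss b1 γ1 x * W b2) := by
    intro Δ2 hΔ2 x
    have hα : 0 ≤ c * gauss b1 γ1 x := (mul_pos hc (gauss_pos _ _ _)).le
    have h := rect_gauss (α := c * gauss b1 γ1 x) (m := mm x) hα hb2 hΔ2
    have heq : (fun j : ℤ => c * gauss b1 γ1 x * gauss b2 (mm x) ((j : ℝ) * Δ2) * Δ2)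
        = fun j : ℤ => F x ((j : ℝ) * Δ2) * Δ2 := by
      funext j; rw [hkey]
    rwa [heq] at h
  refine ⟨hFpos, c * Real.sqrt (π / b2) * W b1 + c * W b2 * (Real.sqrt (π / b1) + W b1),
    add_nonneg (mul_nonneg (mul_nonneg hc.le hsq2) (W_nonneg b1))
      (mul_nonneg (mul_nonneg hc.le (W_nonneg b2)) (add_nonneg hsq1 (W_nonneg b1))), ?_⟩
  intro Δ1 Δ2 hΔ1 hΔ1' hΔ2 hΔ2'
  have hsumf : Summable (fun i : ℤ => c * gauss a1 γ1 ((i:ℝ) * Δ1) * Δ1) :=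
    (rect_gauss hc.le ha1 hΔ1).1
  have hsumg : Summable (fun j : ℤ => 1 * gauss a2 γ2 ((j:ℝ) * Δ2) * Δ2) :=
    (rect_gauss zero_le_one ha2 hΔ2).1
  have hsumprod : Summable (fun p : ℤ × ℤ =>
      (c * gauss a1 γ1 ((p.1:ℝ) * Δ1) * Δ1) * (1 * gauss a2 γ2 ((p.2:ℝ) * Δ2) * Δ2)) :=
    hsumf.mul_of_nonneg hsumg
      (fun i => mul_nonneg (mul_nonneg hc.le (gauss_pos _ _ _).le) hΔ1.le)
      (fun j => mul_nonneg (mul_nonneg zero_le_one (gauss_pos _ _ _).le) hΔ2.le)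
  have hSum : Summable (fun ij : ℤ × ℤ => F ((ij.1:ℝ) * Δ1) ((ij.2:ℝ) * Δ2) * Δ1 * Δ2) := by
    apply Summable.of_nonneg_of_le
      (fun ij => mul_nonneg (mul_nonneg (hFpos _ _).le hΔ1.le) hΔ2.le) _ hsumprod
    intro ij
    calc F ((ij.1:ℝ)*Δ1) ((ij.2:ℝ)*Δ2) * Δ1 * Δ2
        ≤ c * gauss a1 γ1 ((ij.1:ℝ)*Δ1) * gauss a2 γ2 ((ij.2:ℝ)*Δ2) * Δ1 * Δ2 := by
          exact mul_le_mul_of_nonneg_right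
            (mul_le_mul_of_nonneg_right (henv _ _) hΔ1.le) hΔ2.le
      _ = (c * gauss a1 γ1 ((ij.1:ℝ)*Δ1) * Δ1) * (1 * gauss a2 γ2 ((ij.2:ℝ)*Δ2) * Δ2) := by
          ring
  refine ⟨hSum, ?_⟩
  have hinner : ∀ i : ℤ, (∑' j : ℤ, F ((i:ℝ)*Δ1) ((j:ℝ)*Δ2) * Δ1 * Δ2)
      = (∑' j : ℤ, F ((i:ℝ)*Δ1) ((j:ℝ)*Δ2) * Δ2) * Δ1 := by
    intro i
    rw [← tsum_mul_right]
    exact tsum_congr fun j => by ring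
  have hfub : (∑' ij : ℤ × ℤ, F ((ij.1:ℝ)*Δ1) ((ij.2:ℝ)*Δ2) * Δ1 * Δ2)
      = ∑' i : ℤ, (∑' j : ℤ, F ((i:ℝ)*Δ1) ((j:ℝ)*Δ2) * Δ2) * Δ1 := by
    rw [Summable.tsum_prod' hSum (fun i => hSum.prod_factor i)]
    exact tsum_congr hinner
  have hRsum : Summable (fun i : ℤ => (∑' j : ℤ, F ((i:ℝ)*Δ1) ((j:ℝ)*Δ2) * Δ2) * Δ1) := by
    have h := hSum.prod
    have he : (fun i : ℤ => ∑' j : ℤ, F ((i:ℝ)*Δ1) ((j:ℝ)*Δ2) * Δ1 * Δ2)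
        = fun i : ℤ => (∑' j : ℤ, F ((i:ℝ)*Δ1) ((j:ℝ)*Δ2) * Δ2) * Δ1 := funext hinner
    rwa [he] at h
  have hφ := rect_gauss (α := c * Real.sqrt (π / b2)) (m := γ1)
      (mul_nonneg hc.le hsq2) hb1 hΔ1
  have hφsum := hφ.1
  have hφbound : |(∑' i : ℤ, c * Real.sqrt (π / b2) * gauss b1 γ1 ((i:ℝ)*Δ1) * Δ1) - 1|
      ≤ Δ1 * (c * Real.sqrt (π / b2) * W b1) := by
    have h := hφ.2
    rwa [hc1] at h
  have hL := rect_gauss (α := (1:ℝ)) (m := γ1) zero_le_one hb1 hΔ1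
  have hLsum := hL.1
  have hLle : (∑' i : ℤ, 1 * gauss b1 γ1 ((i:ℝ)*Δ1) * Δ1) ≤ Real.sqrt (π / b1) + W b1 := by
    have h := (abs_le.mp hL.2).2
    have hW := W_nonneg b1
    have h3 : Δ1 * (1 * W b1) ≤ 1 * (1 * W b1) :=
      mul_le_mul_of_nonneg_right hΔ1' (by linarith)
    have h4 : (1:ℝ) * Real.sqrt (π / b1) = Real.sqrt (π / b1) := one_mul _
    linarith
  have hdiffterm : ∀ i : ℤ,
      |(∑' j : ℤ, F ((i:ℝ)*Δ1) ((j:ℝ)*Δ2) * Δ2) * Δ1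
        - c * Real.sqrt (π / b2) * gauss b1 γ1 ((i:ℝ)*Δ1) * Δ1|
      ≤ (Δ2 * (c * W b2)) * (1 * gauss b1 γ1 ((i:ℝ)*Δ1) * Δ1) := by
    intro i
    have h := (hrow Δ2 hΔ2 ((i:ℝ)*Δ1)).2
    have e : (∑' j : ℤ, F ((i:ℝ)*Δ1) ((j:ℝ)*Δ2) * Δ2) * Δ1
        - c * Real.sqrt (π / b2) * gauss b1 γ1 ((i:ℝ)*Δ1) * Δ1
        = ((∑' j : ℤ, F ((i:ℝ)*Δ1) ((j:ℝ)*Δ2) * Δ2)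
            - c * gauss b1 γ1 ((i:ℝ)*Δ1) * Real.sqrt (π / b2)) * Δ1 := by ring
    rw [e, abs_mul, abs_of_pos hΔ1]
    calc |(∑' j : ℤ, F ((i:ℝ)*Δ1) ((j:ℝ)*Δ2) * Δ2)
            - c * gauss b1 γ1 ((i:ℝ)*Δ1) * Real.sqrt (π / b2)| * Δ1
        ≤ (Δ2 * (c * gauss b1 γ1 ((i:ℝ)*Δ1) * W b2)) * Δ1 :=
          mul_le_mul_of_nonneg_right h hΔ1.le
      _ = (Δ2 * (c * W b2)) * (1 * gauss b1 γ1 ((i:ℝ)*Δ1) * Δ1) := by ring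
  have hBsum : Summable (fun i : ℤ =>
      (Δ2 * (c * W b2)) * (1 * gauss b1 γ1 ((i:ℝ)*Δ1) * Δ1)) := hLsum.mul_left _
  have habs_sum : Summable (fun i : ℤ =>
      |(∑' j : ℤ, F ((i:ℝ)*Δ1) ((j:ℝ)*Δ2) * Δ2) * Δ1
        - c * Real.sqrt (π / b2) * gauss b1 γ1 ((i:ℝ)*Δ1) * Δ1|) :=
    Summable.of_nonneg_of_le (fun _ => abs_nonneg _) hdiffterm hBsum
  have hDbound : |(∑' i : ℤ, (∑' j : ℤ, F ((i:ℝ)*Δ1) ((j:ℝ)*Δ2) * Δ2) * Δ1)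
      - ∑' i : ℤ, c * Real.sqrt (π / b2) * gauss b1 γ1 ((i:ℝ)*Δ1) * Δ1|
      ≤ (Δ2 * (c * W b2)) * (Real.sqrt (π / b1) + W b1) := by
    rw [← Summable.tsum_sub hRsum hφsum]
    have hnn : (0:ℝ) ≤ Δ2 * (c * W b2) :=
      mul_nonneg hΔ2.le (mul_nonneg hc.le (W_nonneg b2))
    calc |∑' i : ℤ, ((∑' j : ℤ, F ((i:ℝ)*Δ1) ((j:ℝ)*Δ2) * Δ2) * Δ1
            - c * Real.sqrt (π / b2) * gauss b1 γ1 ((i:ℝ)*Δ1) * Δ1)|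
        ≤ ∑' i : ℤ, |(∑' j : ℤ, F ((i:ℝ)*Δ1) ((j:ℝ)*Δ2) * Δ2) * Δ1
            - c * Real.sqrt (π / b2) * gauss b1 γ1 ((i:ℝ)*Δ1) * Δ1| := by
          have h2 : Summable (fun i : ℤ =>
              ‖(∑' j : ℤ, F ((i:ℝ)*Δ1) ((j:ℝ)*Δ2) * Δ2) * Δ1
                - c * Real.sqrt (π / b2) * gauss b1 γ1 ((i:ℝ)*Δ1) * Δ1‖) := by
            simpa only [Real.norm_eq_abs] using habs_sum
          have h3 := norm_tsum_le_tsum_norm h2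
          simpa only [Real.norm_eq_abs] using h3
      _ ≤ ∑' i : ℤ, (Δ2 * (c * W b2)) * (1 * gauss b1 γ1 ((i:ℝ)*Δ1) * Δ1) :=
          Summable.tsum_le_tsum hdiffterm habs_sum hBsum
      _ = (Δ2 * (c * W b2)) * ∑' i : ℤ, 1 * gauss b1 γ1 ((i:ℝ)*Δ1) * Δ1 := tsum_mul_left
      _ ≤ (Δ2 * (c * W b2)) * (Real.sqrt (π / b1) + W b1) :=
          mul_le_mul_of_nonneg_left hLle hnn
  rw [hfub]
  have hC1 : (0:ℝ) ≤ c * Real.sqrt (π / b2) * W b1 :=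
    mul_nonneg (mul_nonneg hc.le hsq2) (W_nonneg b1)
  have hC2 : (0:ℝ) ≤ c * W b2 * (Real.sqrt (π / b1) + W b1) :=
    mul_nonneg (mul_nonneg hc.le (W_nonneg b2)) (add_nonneg hsq1 (W_nonneg b1))
  have h5 := abs_add_le ((∑' i : ℤ, (∑' j : ℤ, F ((i:ℝ)*Δ1) ((j:ℝ)*Δ2) * Δ2) * Δ1)
      - ∑' i : ℤ, c * Real.sqrt (π / b2) * gauss b1 γ1 ((i:ℝ)*Δ1) * Δ1)
      ((∑' i : ℤ, c * Real.sqrt (π / b2) * gauss b1 γ1 ((i:ℝ)*Δ1) * Δ1) - 1)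
  simp only [sub_add_sub_cancel] at h5
  have h6 : (Δ2 * (c * W b2)) * (Real.sqrt (π / b1) + W b1)
      = Δ2 * (c * W b2 * (Real.sqrt (π / b1) + W b1)) := by ring
  have h7 : Δ2 * (c * W b2 * (Real.sqrt (π / b1) + W b1))
        + Δ1 * (c * Real.sqrt (π / b2) * W b1)
      ≤ (c * Real.sqrt (π / b2) * W b1 + c * W b2 * (Real.sqrt (π / b1) + W b1)) * (Δ1 + Δ2) := by
    nlinarith [mul_nonneg hC1 hΔ2.le, mul_nonneg hC2 hΔ1.le]
  calc |(∑' i : ℤ, (∑' j : ℤ, F ((i:ℝ)*Δ1) ((j:ℝ)*Δ2) * Δ2) * Δ1) - 1|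
      ≤ (Δ2 * (c * W b2)) * (Real.sqrt (π / b1) + W b1)
        + Δ1 * (c * Real.sqrt (π / b2) * W b1) := h5.trans (add_le_add hDbound hφbound)
    _ ≤ (c * Real.sqrt (π / b2) * W b1 + c * W b2 * (Real.sqrt (π / b1) + W b1)) * (Δ1 + Δ2) := by
        rw [h6]; exact h7

set_option maxHeartbeats 1000000 in
/-- Grid-independent bound on the maximum (row-sum) norm of the jump matrix `A^{(J)}` with
entries `λ f̄((i−k)Δx1, (j−l)Δx2) Δx1 Δx2`, for a bivariate Gaussian density `f̄`: each row sum
is at most `λ Σ_{i,j∈ℤ} f̄(iΔx1, jΔx2)Δx1Δx2`; this lattice sum is finite, the resulting bound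
tends to `λ` as `Δx1, Δx2 → 0⁺`, and `‖A^{(J)}‖_∞ ≤ λ(1 + C(Δx1 + Δx2))` with a constant `C`
depending only on `f̄`. -/
theorem jump_matrix_maxnorm_bound (γ1 γ2 δ1 δ2 ρ lam : ℝ)
    (hδ1 : 0 < δ1) (hδ2 : 0 < δ2) (hρ : |ρ| < 1) (hlam : 0 ≤ lam) :
    let fbar : ℝ → ℝ → ℝ := fun x y =>
      (2 * π * δ1 * δ2 * Real.sqrt (1 - ρ ^ 2))⁻¹ *
        Real.exp (-((((x - γ1) / δ1) ^ 2 + ((y - γ2) / δ2) ^ 2 -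
          2 * ρ * ((x - γ1) / δ1) * ((y - γ2) / δ2)) / (2 * (1 - ρ ^ 2))))
    Tendsto
      (fun d : ℝ × ℝ =>
        lam * ∑' ij : ℤ × ℤ, fbar ((ij.1 : ℝ) * d.1) ((ij.2 : ℝ) * d.2) * d.1 * d.2)
      (nhdsWithin (0, 0) (Set.Ioi (0 : ℝ) ×ˢ Set.Ioi (0 : ℝ))) (nhds lam) ∧
    ∃ C : ℝ, ∀ Δ1 Δ2 : ℝ, 0 < Δ1 → Δ1 ≤ 1 → 0 < Δ2 → Δ2 ≤ 1 →
      Summable (fun ij : ℤ × ℤ => fbar ((ij.1 : ℝ) * Δ1) ((ij.2 : ℝ) * Δ2) * Δ1 * Δ2) ∧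
      (∀ (M1 M2 : ℕ) (p : Fin M1 × Fin M2),
        ∑ q : Fin M1 × Fin M2,
            |lam * fbar ((((q.1 : ℕ) : ℝ) - ((p.1 : ℕ) : ℝ)) * Δ1)
                ((((q.2 : ℕ) : ℝ) - ((p.2 : ℕ) : ℝ)) * Δ2) * Δ1 * Δ2| ≤
          lam * ∑' ij : ℤ × ℤ, fbar ((ij.1 : ℝ) * Δ1) ((ij.2 : ℝ) * Δ2) * Δ1 * Δ2) ∧
      (∀ (M1 M2 : ℕ) (p : Fin M1 × Fin M2),
        ∑ q : Fin M1 × Fin M2,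
            |lam * fbar ((((q.1 : ℕ) : ℝ) - ((p.1 : ℕ) : ℝ)) * Δ1)
                ((((q.2 : ℕ) : ℝ) - ((p.2 : ℕ) : ℝ)) * Δ2) * Δ1 * Δ2| ≤
          lam * (1 + C * (Δ1 + Δ2))) := by
  
  intro fbar
  obtain ⟨hFpos, C0, hC0, hmain⟩ := main_aux γ1 γ2 δ1 δ2 ρ hδ1 hδ2 hρ fbar (fun x y => rfl)
  constructor
  · -- tendsto part
    rw [← tendsto_sub_nhds_zero_iff]
    apply squeeze_zero_norm' (a := fun d : ℝ × ℝ => lam * C0 * (d.1 + d.2))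
    · have hev1 : ∀ᶠ d : ℝ × ℝ in nhdsWithin (0, 0) (Set.Ioi (0:ℝ) ×ˢ Set.Ioi (0:ℝ)),
          d ∈ Set.Ioi (0:ℝ) ×ˢ Set.Ioi (0:ℝ) := eventually_mem_nhdsWithin
      have hev2 : ∀ᶠ d : ℝ × ℝ in nhdsWithin (0, 0) (Set.Ioi (0:ℝ) ×ˢ Set.Ioi (0:ℝ)),
          d ∈ Set.Iio (1:ℝ) ×ˢ Set.Iio (1:ℝ) := by
        apply Filter.Eventually.filter_mono nhdsWithin_le_nhds
        exact Filter.eventually_of_mem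
          (prod_mem_nhds (Iio_mem_nhds one_pos) (Iio_mem_nhds one_pos)) (fun d hd => hd)
      filter_upwards [hev1, hev2] with d hd hd'
      have hd1 : 0 < d.1 := hd.1
      have hd2 : 0 < d.2 := hd.2
      have hd1' : d.1 < 1 := hd'.1
      have hd2' : d.2 < 1 := hd'.2
      have hb := (hmain d.1 d.2 hd1 hd1'.le hd2 hd2'.le).2
      have he : lam * (∑' ij : ℤ × ℤ, fbar ((ij.1:ℝ) * d.1) ((ij.2:ℝ) * d.2) * d.1 * d.2) - lam
          = lam * ((∑' ij : ℤ × ℤ, fbar ((ij.1:ℝ) * d.1) ((ij.2:ℝ) * d.2) * d.1 * d.2) - 1) := by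
        ring
      rw [Real.norm_eq_abs, he, abs_mul, abs_of_nonneg hlam]
      calc lam * |(∑' ij : ℤ × ℤ, fbar ((ij.1:ℝ) * d.1) ((ij.2:ℝ) * d.2) * d.1 * d.2) - 1|
          ≤ lam * (C0 * (d.1 + d.2)) := mul_le_mul_of_nonneg_left hb hlam
        _ = lam * C0 * (d.1 + d.2) := by ring
    · have h := ((continuous_const.mul (continuous_fst.add continuous_snd)
        : Continuous fun d : ℝ × ℝ => lam * C0 * (d.1 + d.2))).tendsto ((0, 0) : ℝ × ℝ)
      have h0 : (lam * C0) * (((0:ℝ), (0:ℝ)).1 + ((0:ℝ), (0:ℝ)).2) = 0 := by simp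
      rw [show ((fun x : ℝ × ℝ => lam * C0) * fun d : ℝ × ℝ => d.1 + d.2) (0, 0) = 0 by simp] at h
      exact h.mono_left nhdsWithin_le_nhds
  · refine ⟨C0, fun Δ1 Δ2 hΔ1 hΔ1' hΔ2 hΔ2' => ?_⟩
    obtain ⟨hSum, hbound⟩ := hmain Δ1 Δ2 hΔ1 hΔ1' hΔ2 hΔ2'
    have hrows : ∀ (M1 M2 : ℕ) (p : Fin M1 × Fin M2),
        (∑ q : Fin M1 × Fin M2,
            |lam * fbar ((((q.1:ℕ):ℝ) - ((p.1:ℕ):ℝ)) * Δ1)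
              ((((q.2:ℕ):ℝ) - ((p.2:ℕ):ℝ)) * Δ2) * Δ1 * Δ2|)
          ≤ lam * ∑' ij : ℤ × ℤ, fbar ((ij.1:ℝ) * Δ1) ((ij.2:ℝ) * Δ2) * Δ1 * Δ2 := by
      intro M1 M2 p
      have hgnn : ∀ ij : ℤ × ℤ, 0 ≤ fbar ((ij.1:ℝ)*Δ1) ((ij.2:ℝ)*Δ2) * Δ1 * Δ2 :=
        fun ij => mul_nonneg (mul_nonneg (hFpos _ _).le hΔ1.le) hΔ2.le
      have hinj : Function.Injective (fun q : Fin M1 × Fin M2 =>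
          (((((q.1:ℕ):ℤ) - ((p.1:ℕ):ℤ)), (((q.2:ℕ):ℤ) - ((p.2:ℕ):ℤ))) : ℤ × ℤ)) := by
        intro a b h
        rw [Prod.mk.injEq] at h
        have h1 : (a.1 : ℕ) = (b.1 : ℕ) := by omega
        have h2 : (a.2 : ℕ) = (b.2 : ℕ) := by omega
        exact Prod.ext (Fin.ext h1) (Fin.ext h2)
      have hterm : ∀ q : Fin M1 × Fin M2,
          |lam * fbar ((((q.1:ℕ):ℝ) - ((p.1:ℕ):ℝ)) * Δ1)
              ((((q.2:ℕ):ℝ) - ((p.2:ℕ):ℝ)) * Δ2) * Δ1 * Δ2|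
          = lam * (fbar ((((((q.1:ℕ):ℤ) - ((p.1:ℕ):ℤ)) : ℤ):ℝ) * Δ1)
              ((((((q.2:ℕ):ℤ) - ((p.2:ℕ):ℤ)) : ℤ):ℝ) * Δ2) * Δ1 * Δ2) := by
        intro q
        have e1 : (((q.1:ℕ):ℝ) - ((p.1:ℕ):ℝ)) = ((((((q.1:ℕ):ℤ) - ((p.1:ℕ):ℤ)) : ℤ)):ℝ) := by
          push_cast; ring
        have e2 : (((q.2:ℕ):ℝ) - ((p.2:ℕ):ℝ)) = ((((((q.2:ℕ):ℤ) - ((p.2:ℕ):ℤ)) : ℤ)):ℝ) := by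
          push_cast; ring
        rw [e1, e2, abs_of_nonneg (mul_nonneg (mul_nonneg (mul_nonneg hlam
          (hFpos _ _).le) hΔ1.le) hΔ2.le)]
        ring
      calc (∑ q : Fin M1 × Fin M2,
            |lam * fbar ((((q.1:ℕ):ℝ) - ((p.1:ℕ):ℝ)) * Δ1)
              ((((q.2:ℕ):ℝ) - ((p.2:ℕ):ℝ)) * Δ2) * Δ1 * Δ2|)
          = ∑ q : Fin M1 × Fin M2, lam * (fbar ((((((q.1:ℕ):ℤ) - ((p.1:ℕ):ℤ)) : ℤ):ℝ) * Δ1)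
              ((((((q.2:ℕ):ℤ) - ((p.2:ℕ):ℤ)) : ℤ):ℝ) * Δ2) * Δ1 * Δ2) :=
            Finset.sum_congr rfl (fun q _ => hterm q)
        _ = lam * ∑ q : Fin M1 × Fin M2, fbar ((((((q.1:ℕ):ℤ) - ((p.1:ℕ):ℤ)) : ℤ):ℝ) * Δ1)
              ((((((q.2:ℕ):ℤ) - ((p.2:ℕ):ℤ)) : ℤ):ℝ) * Δ2) * Δ1 * Δ2 := by
            rw [Finset.mul_sum]
        _ ≤ lam * ∑' ij : ℤ × ℤ, fbar ((ij.1:ℝ) * Δ1) ((ij.2:ℝ) * Δ2) * Δ1 * Δ2 := by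
            apply mul_le_mul_of_nonneg_left _ hlam
            have hst := Summable.sum_le_tsum
              (f := fun ij : ℤ × ℤ => fbar ((ij.1:ℝ)*Δ1) ((ij.2:ℝ)*Δ2) * Δ1 * Δ2)
              (Finset.univ.map ⟨_, hinj⟩) (fun ij _ => hgnn ij) hSum
            rw [Finset.sum_map] at hst
            simpa using hst
    refine ⟨hSum, hrows, ?_⟩
    intro M1 M2 p
    have hT : (∑' ij : ℤ × ℤ, fbar ((ij.1:ℝ) * Δ1) ((ij.2:ℝ) * Δ2) * Δ1 * Δ2)
        ≤ 1 + C0 * (Δ1 + Δ2) := by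
      have := (abs_le.mp hbound).2; linarith
    exact (hrows M1 M2 p).trans (mul_le_mul_of_nonneg_left hT hlam)
end
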